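/- Let r = r₁r₂⋯r_i be a ≤3-irreducible ternary word with i ≥ 3 and r₁ = r₃, and let n ≥ i. Then T(n, r) ≥ T(n−1, r∖r₁), where r∖r₁ = r₂r₃⋯r_i is r with its first symbol removed. -/

import Mathlib

/-- Tandem duplication of the length-`k` block starting at position `i`:
`x = u v w` with `|u| = i`, `|v| = k` is sent to `u v v w`. -/
def DupAt {α : Type*} (i k : ℕ) (x y : List α) : Prop :=
  ∃ u v w : List α, x = u ++ v ++ w ∧ u.length = i ∧ v.length = k ∧ y = u ++ v ++ v ++ w

/-- A single tandem duplication of some length between `1` and `k`. -/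
def DupLE {α : Type*} (k : ℕ) (x y : List α) : Prop :=
  ∃ u v w : List α, x = u ++ v ++ w ∧ 1 ≤ v.length ∧ v.length ≤ k ∧ y = u ++ v ++ v ++ w

/-- A single tandem duplication of length exactly `k` whose duplicated block has
pairwise distinct symbols. -/
def DupD {α : Type*} (k : ℕ) (x y : List α) : Prop :=
  ∃ u v w : List α, x = u ++ v ++ w ∧ v.length = k ∧ v.Nodup ∧ y = u ++ v ++ v ++ w

/-- `x ⇒*_{≤k} y`: `y` is obtained from `x` by finitely many tandem duplications of
length at most `k`. -/
def DerivLE {α : Type*} (k : ℕ) : List α → List α → Prop := Relation.ReflTransGen (DupLE k)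

/-- `x ⇒*_{k_d} y`: finitely many tandem duplications of length exactly `k`, each
duplicated block having pairwise distinct symbols. -/
def DerivD {α : Type*} (k : ℕ) : List α → List α → Prop := Relation.ReflTransGen (DupD k)

/-- `x` is `≤k`-irreducible: it contains no square `v v` with `1 ≤ |v| ≤ k`. -/
def IrredLE {α : Type*} (k : ℕ) (x : List α) : Prop :=
  ¬ ∃ u v w : List α, 1 ≤ v.length ∧ v.length ≤ k ∧ x = u ++ v ++ v ++ w

/-- The set of `≤k`-roots of `x`. -/
def RootsLE {α : Type*} (k : ℕ) (x : List α) : Set (List α) :=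
  {z | IrredLE k z ∧ DerivLE k z x}

/-- `x` and `y` are `≤k`-confusable. -/
def Confusable {α : Type*} (k : ℕ) (x y : List α) : Prop :=
  ∃ z, DerivLE k x z ∧ DerivLE k y z

/-- `r` contains at least three distinct symbols. -/
def Has3 {α : Type*} [DecidableEq α] (r : List α) : Prop := 3 ≤ r.toFinset.card

/-- The region `Reg(r)` of a `≤3`-irreducible word `r` with at least three distinct
symbols. -/
def Reg {α : Type*} [DecidableEq α] (r : List α) : List α :=
  if r[0]? = r[2]? then
    if r[1]? ≠ r[4]? then r.take 4
    else if r[2]? ≠ r[5]? then r.take 5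
    else r.take 6
  else
    if r[0]? ≠ r[3]? then r.take 3
    else if r[1]? ≠ r[4]? then r.take 4
    else r.take 5

/-- `main(r)`: the first length-3 substring of `r` with pairwise distinct symbols. -/
def mainSub {α : Type*} [DecidableEq α] (r : List α) : List α :=
  if r[0]? = r[2]? then (r.drop 1).take 3 else r.take 3

/-- The number of occurrences of `z` as a contiguous substring of `x`. -/
def Count {α : Type*} [DecidableEq α] (z x : List α) : ℕ :=
  ((List.range (x.length + 1)).filter fun i => decide ((x.drop i).take z.length = z)).length

/-- `Count(rot(z), x)` for a length-3 word `z = abc`: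
occurrences of `abc`, `bca` and `cab` in `x`. -/
def CountRot {α : Type*} [DecidableEq α] (z x : List α) : ℕ :=
  Count z x + Count (z.rotate 1) x + Count (z.rotate 2) x

/-- `ExtPref(g, x)`: the longest prefix of `x` belonging to `D*_{≤3}(g)`. -/
noncomputable def ExtPref {α : Type*} (g x : List α) : List α :=
  letI : DecidablePred fun n => DerivLE 3 g (x.take n) := Classical.decPred _
  x.take (Nat.findGreatest (fun n => DerivLE 3 g (x.take n)) x.length)

/-- The symbol `a` when `Reg r = w (a b c)^ℓ a b`, i.e. the second-to-last symbol
of `Reg r`. -/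
def regA {α : Type*} [DecidableEq α] [Inhabited α] (r : List α) : α :=
  (Reg r).reverse.getD 1 default

/-- The special prefix `*Pref(r, x)`: with `p = ExtPref(Reg r, x)` and `p_i` the last
occurrence of the symbol `a` in `p`, this is `p₁ ⋯ p_{i-1}`. -/
noncomputable def starPref {α : Type*} [DecidableEq α] [Inhabited α] (r x : List α) : List α :=
  (ExtPref (Reg r) x).take
    ((ExtPref (Reg r) x).length - 1 - (ExtPref (Reg r) x).reverse.idxOf (regA r))

/-- The unique `≤k`-root of `x` (when it is unique). -/
noncomputable def rootLE {α : Type*} (k : ℕ) (x : List α) : List α :=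
  letI := Classical.propDecidable (∃ z, RootsLE k x = {z})
  if h : ∃ z, RootsLE k x = {z} then h.choose else x

/-- The sequence `x₁, x₂, …` with `x₁ = x` and `x_{j+1} = x_j ∖ *Pref(r_j, x_j)`
where `r_j` is the unique `≤3`-root of `x_j` (0-indexed: `seqX x j = x_{j+1}`). -/
noncomputable def seqX {α : Type*} [DecidableEq α] [Inhabited α] (x : List α) : ℕ → List α
  | 0 => x
  | n + 1 => (seqX x n).drop (starPref (rootLE 3 (seqX x n)) (seqX x n)).length

/-- `r_{j+1}`, the unique `≤3`-root of `x_{j+1}` (0-indexed). -/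
noncomputable def rj {α : Type*} [DecidableEq α] [Inhabited α] (x : List α) (j : ℕ) : List α :=
  rootLE 3 (seqX x j)

/-- `x` determines `m` regions: the roots `r₁, …, r_m` have at least three distinct
symbols and `r_{m+1}` does not. -/
def HasRegionsX {α : Type*} [DecidableEq α] [Inhabited α] (x : List α) (m : ℕ) : Prop :=
  (∀ j < m, Has3 (rj x j)) ∧ ¬ Has3 (rj x m)

/-- `c_{j+1}` in the label of `x` (0-indexed):
`Count(main(r_{j+1}), R_{≤2}(p_{j+1}))` where `p_{j+1} = ExtPref(Reg(r_{j+1}), x_{j+1})`. -/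
noncomputable def labelC {α : Type*} [DecidableEq α] [Inhabited α] (x : List α) (j : ℕ) : ℕ :=
  Count (mainSub (rj x j)) (rootLE 2 (ExtPref (Reg (rj x j)) (seqX x j)))

/-- `δ_{j+1} = +` in the label of `x` (0-indexed):
`Count(rot(main(r_{j+1})), p_{j+1}) > 0`. -/
noncomputable def labelPlus {α : Type*} [DecidableEq α] [Inhabited α] (x : List α) (j : ℕ) : Prop :=
  0 < CountRot (mainSub (rj x j)) (ExtPref (Reg (rj x j)) (seqX x j))

/-- The sequence `ρ₁, ρ₂, …` defining the regions of `r`: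
`ρ_{j+1}` is `ρ_j` with the prefix `w (abc)^ℓ` removed, where `Reg(ρ_j) = w (abc)^ℓ ab`. -/
def rho {α : Type*} [DecidableEq α] (r : List α) : ℕ → List α
  | 0 => r
  | n + 1 => (rho r n).drop ((Reg (rho r n)).length - 2)

/-- The `≤3`-irreducible word `r` has exactly `m` regions. -/
def HasRegionsR {α : Type*} [DecidableEq α] (r : List α) (m : ℕ) : Prop :=
  (∀ j < m, Has3 (rho r j)) ∧ ¬ Has3 (rho r m)

/-- `C` is an `(n, ≤3; r)`-TD code: words of length `n` in `D*_{≤3}(r)`, pairwise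
non-`≤3`-confusable. -/
def TDCode (n : ℕ) (r : List (Fin 3)) (C : Finset (List (Fin 3))) : Prop :=
  (∀ x ∈ C, x.length = n ∧ DerivLE 3 r x) ∧
    ∀ x ∈ C, ∀ y ∈ C, x ≠ y → ¬ Confusable 3 x y

/-- `T(n, r)`: the maximum size of an `(n, ≤3; r)`-TD code. -/
noncomputable def Tnr (n : ℕ) (r : List (Fin 3)) : ℕ :=
  sSup {k | ∃ C : Finset (List (Fin 3)), TDCode n r C ∧ C.card = k}

/-- `C` is an `(n, ≤3; 3)`-TD code. -/
def TDCodeAll (n : ℕ) (C : Finset (List (Fin 3))) : Prop :=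
  (∀ x ∈ C, x.length = n) ∧ ∀ x ∈ C, ∀ y ∈ C, x ≠ y → ¬ Confusable 3 x y

/-- `T(n)`: the maximum size of an `(n, ≤3; 3)`-TD code. -/
noncomputable def Tn (n : ℕ) : ℕ :=
  sSup {k | ∃ C : Finset (List (Fin 3)), TDCodeAll n C ∧ C.card = k}

/-- `|Irr_{≤3}(i, 3)|`: the number of `≤3`-irreducible ternary words of length `i`. -/
noncomputable def IrrCount (i : ℕ) : ℕ :=
  Nat.card {x : List (Fin 3) // x.length = i ∧ IrredLE 3 x}

/-- The two codewords of Construction 2 built from the `≤3`-irreducible word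
`r = r₁ r₂ ⋯ r_i` (with `i ≥ 4`). -/
def C2 (r : List (Fin 3)) : List (Fin 3) × List (Fin 3) :=
  let r1 := r.getD 0 0; let r2 := r.getD 1 0; let r3 := r.getD 2 0
  let r4 := r.getD 3 0; let r5 := r.getD 4 0
  if r1 ≠ r3 then
    (r.take 3 ++ r, [r1, r2, r2, r3, r3, r4, r4] ++ r.drop 4)
  else if 5 ≤ r.length then
    ([r1, r2, r1, r4, r2, r1, r4] ++ r.drop 4,
      [r1, r2, r1, r1, r4, r4, r5, r5] ++ r.drop 5)
  else
    ([r1, r2, r1, r4, r2, r1, r4], [r1, r2, r1, r1, r4, r4, r4])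

section Aux

open List

variable {α : Type*}

lemma dupLE_mk {k : ℕ} (u v w : List α) (h1 : 1 ≤ v.length) (h2 : v.length ≤ k) :
    DupLE k (u ++ v ++ w) (u ++ v ++ v ++ w) :=
  ⟨u, v, w, rfl, h1, h2, rfl⟩

lemma dupLE_append_left {k : ℕ} (p : List α) {x y : List α} (h : DupLE k x y) :
    DupLE k (p ++ x) (p ++ y) := by
  obtain ⟨u, v, w, rfl, h1, h2, rfl⟩ := h
  exact ⟨p ++ u, v, w, by simp, h1, h2, by simp⟩

lemma derivLE_append_left {k : ℕ} (p : List α) {x y : List α} (h : DerivLE k x y) :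
    DerivLE k (p ++ x) (p ++ y) :=
  Relation.ReflTransGen.lift (p ++ ·) (fun _ _ hab => dupLE_append_left p hab) _ _ h

lemma derivLE_cons {k : ℕ} (c : α) {x y : List α} (h : DerivLE k x y) :
    DerivLE k (c :: x) (c :: y) := by
  simpa using derivLE_append_left [c] h

lemma derivLE_trans {k : ℕ} {x y z : List α} (h1 : DerivLE k x y) (h2 : DerivLE k y z) :
    DerivLE k x z := Relation.ReflTransGen.trans h1 h2

/-- `x` has the shape `b^p (a x')` with `p ≥ 1`. -/
def ShapeBA (b a : α) (x : List α) : Prop :=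
  ∃ p x', x = List.replicate (p + 1) b ++ a :: x'

lemma replicate_split {b : α} {u l : List α} {p : ℕ} (h : u ++ l = List.replicate p b) :
    ∃ i j, i + j = p ∧ u = List.replicate i b ∧ l = List.replicate j b := by
  refine ⟨u.length, l.length, ?_, ?_, ?_⟩
  · have := congrArg List.length h
    simpa using this
  · exact List.eq_replicate_length.mpr fun c hc =>
      List.eq_of_mem_replicate (h ▸ (List.mem_append.mpr (Or.inl hc)))
  · exact List.eq_replicate_length.mpr fun c hc =>
      List.eq_of_mem_replicate (h ▸ (List.mem_append.mpr (Or.inr hc)))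

lemma rep_merge (b : α) (i j : ℕ) (l : List α) :
    List.replicate i b ++ (List.replicate j b ++ l) = List.replicate (i + j) b ++ l := by
  rw [← List.append_assoc, ← List.replicate_add]

lemma shape_dup {b a : α} {k : ℕ} {x y : List α} (h : DupLE k x y) (hs : ShapeBA b a x) :
    ShapeBA b a y := by
  obtain ⟨u, v, w, hx, hv1, _, rfl⟩ := h
  obtain ⟨p, x', rfl⟩ := hs
  rw [List.append_assoc] at hx
  rcases List.append_eq_append_iff.mp hx with ⟨l, hu, hrest⟩ | ⟨l, hu, hrest⟩
  · -- hu : u = replicate (p+1) b ++ l,  hrest : a :: x' = l ++ (v ++ w)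
    cases l with
    | nil =>
      simp only [List.append_nil] at hu
      simp only [List.nil_append] at hrest
      subst hu
      cases v with
      | nil => simp at hv1
      | cons vh vt =>
        simp only [List.cons_append, List.cons.injEq] at hrest
        obtain ⟨hav, hx'⟩ := hrest
        subst hav; subst hx'
        exact ⟨p, vt ++ a :: vt ++ w, by simp⟩
    | cons c l₂ =>
      simp only [List.cons_append, List.cons.injEq] at hrest
      obtain ⟨hac, hx'⟩ := hrest
      subst hac; subst hx'; subst hu
      exact ⟨p, l₂ ++ v ++ v ++ w, by simp⟩
  · -- hu : replicate (p+1) b = u ++ l,  hrest : v ++ w = l ++ (a :: x')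
    obtain ⟨i, j, hij, rfl, rfl⟩ := replicate_split hu.symm
    rcases List.append_eq_append_iff.mp hrest with ⟨m, h1, h2⟩ | ⟨m, h1, h2⟩
    · -- h1 : replicate j b = v ++ m,  h2 : w = m ++ a :: x'
      obtain ⟨nv, nm, hnm, rfl, rfl⟩ := replicate_split h1.symm
      subst h2
      refine ⟨p + nv, x', ?_⟩
      simp only [List.append_assoc, rep_merge]
      rw [show i + nv + (nv + nm) = p + nv + 1 by omega]
    · -- h1 : v = replicate j b ++ m,  h2 : a :: x' = m ++ w
      cases m with
      | nil =>
        simp only [List.append_nil] at h1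
        simp only [List.nil_append] at h2
        subst h1
        refine ⟨p + j, x', ?_⟩
        rw [← h2]
        simp only [List.append_assoc, rep_merge]
        rw [show i + j + j = p + j + 1 by omega]
      | cons c m₂ =>
        simp only [List.cons_append, List.cons.injEq] at h2
        obtain ⟨hac, hx'⟩ := h2
        subst hac; subst hx'; subst h1
        refine ⟨p, m₂ ++ (List.replicate j b ++ a :: m₂) ++ w, ?_⟩
        rw [show p + 1 = i + j from hij.symm, List.replicate_add]
        simp [List.append_assoc, rep_merge]

lemma shape_deriv {b a : α} {k : ℕ} {t x : List α} (h : DerivLE k t x)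
    (hs : ShapeBA b a t) : ShapeBA b a x := by
  induction h with
  | refl => exact hs
  | tail _ hdup ih => exact shape_dup hdup ih

/-- `b^{p+1} a x' ⇒* b^{p+1} a b^{p+1} a x'`. -/
lemma derive_self_dup (b a : α) :
    ∀ (p : ℕ) (x' : List α),
      DerivLE 3 (List.replicate (p + 1) b ++ a :: x')
        (List.replicate (p + 1) b ++ a :: (List.replicate (p + 1) b ++ a :: x')) := by
  intro p
  induction p with
  | zero =>
    intro x'
    refine Relation.ReflTransGen.single ⟨[], [b, a], x', by simp, by simp, by simp, by simp⟩
  | succ p ih =>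
    intro x'
    have h1 : DerivLE 3 (List.replicate (p + 2) b ++ a :: x')
        (b :: (List.replicate (p + 1) b ++ a :: (List.replicate (p + 1) b ++ a :: x'))) := by
      have := derivLE_cons b (ih x')
      simpa [List.replicate_succ] using this
    refine derivLE_trans h1 (Relation.ReflTransGen.single ?_)
    refine ⟨List.replicate (p + 2) b ++ [a], [b], List.replicate p b ++ a :: x', ?_, by simp,
      by simp, ?_⟩
    · simp [List.replicate_succ, List.append_assoc]
    · simp [List.replicate_succ, List.append_assoc]

/-- Pump the leading `b`-run. -/
lemma pump_b {k : ℕ} (hk : 1 ≤ k) (b : α) (l : List α) :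
    ∀ p q, p ≤ q →
      DerivLE k (List.replicate (p + 1) b ++ l) (List.replicate (q + 1) b ++ l) := by
  intro p q hpq
  induction q, hpq using Nat.le_induction with
  | base => exact Relation.ReflTransGen.refl
  | succ q _ ih =>
    refine derivLE_trans ih (Relation.ReflTransGen.single ?_)
    exact ⟨[], [b], List.replicate q b ++ l, by simp [List.replicate_succ], by simp, by simpa,
      by simp [List.replicate_succ]⟩

lemma key_confusable {b a : α} {x y z : List α}
    (hx : ShapeBA b a x) (hy : ShapeBA b a y)
    (hzx : DerivLE 3 (a :: x) z) (hzy : DerivLE 3 (a :: y) z) :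
    Confusable 3 x y := by
  obtain ⟨p, x', hxe⟩ := hx
  obtain ⟨q, y', hye⟩ := hy
  refine ⟨List.replicate (max p q + 1) b ++ z, ?_, ?_⟩
  · have h1 : DerivLE 3 x (List.replicate (p + 1) b ++ a :: x) := by
      conv_lhs => rw [hxe]
      conv_rhs => rw [show (a :: x) = a :: (List.replicate (p+1) b ++ a :: x') by rw [hxe]]
      exact derive_self_dup b a p x'
    have h2 : DerivLE 3 (List.replicate (p + 1) b ++ (a :: x)) (List.replicate (p + 1) b ++ z) :=
      derivLE_append_left _ hzx
    exact derivLE_trans (derivLE_trans h1 h2)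
      (pump_b (by norm_num) b z p (max p q) (le_max_left p q))
  · have h1 : DerivLE 3 y (List.replicate (q + 1) b ++ a :: y) := by
      conv_lhs => rw [hye]
      conv_rhs => rw [show (a :: y) = a :: (List.replicate (q+1) b ++ a :: y') by rw [hye]]
      exact derive_self_dup b a q y'
    have h2 : DerivLE 3 (List.replicate (q + 1) b ++ (a :: y)) (List.replicate (q + 1) b ++ z) :=
      derivLE_append_left _ hzy
    exact derivLE_trans (derivLE_trans h1 h2)
      (pump_b (by norm_num) b z q (max p q) (le_max_right p q))

end Aux

/-- Proposition 19, first case: if `r` is a `≤3`-irreducible ternary word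
with `r₁ = r₃` and `n ≥ |r|`, then `T(n, r) ≥ T(n − 1, r ∖ r₁)`. -/
theorem recursive_bound_eq (r : List (Fin 3)) (n : ℕ) (hirr : IrredLE 3 r)
    (h3 : 3 ≤ r.length) (h13 : r[0]? = r[2]?) (hn : r.length ≤ n) :
    Tnr (n - 1) r.tail ≤ Tnr n r := by
  obtain ⟨a, b, c, s, rfl⟩ : ∃ a b c s, r = a :: b :: c :: s := by
    match r, h3 with
    | a :: b :: c :: s, _ => exact ⟨a, b, c, s, rfl⟩
  simp only [List.getElem?_cons_zero, List.getElem?_cons_succ] at h13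
  have hca : a = c := Option.some_injective _ h13
  subst hca
  have hn3 : 3 ≤ n := le_trans (by simp) hn
  have hshape_t : ShapeBA b a (b :: a :: s) := ⟨0, s, by simp⟩
  unfold Tnr
  apply csSup_le_csSup
  · refine ⟨Fintype.card (Fin n → Fin 3), ?_⟩
    rintro k ⟨C, hC, rfl⟩
    have hinj : Set.InjOn (fun (l : List (Fin 3)) (i : Fin n) => l.getD i 0) C := by
      intro u hu v hv huv
      have hlu : u.length = n := (hC.1 u hu).1
      have hlv : v.length = n := (hC.1 v hv).1
      apply List.ext_getElem (by rw [hlu, hlv])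
      intro i h1 h2
      have h3' := congrFun huv ⟨i, by omega⟩
      simpa [List.getD_eq_getElem?_getD, List.getElem?_eq_getElem, h1, h2] using h3'
    calc C.card = (C.image (fun (l : List (Fin 3)) (i : Fin n) => l.getD i 0)).card :=
          (Finset.card_image_of_injOn hinj).symm
      _ ≤ _ := Finset.card_le_univ _
  · refine ⟨0, ∅, ⟨?_, ?_⟩, rfl⟩ <;> intro x hx <;> simp at hx
  · rintro k ⟨C, hC, rfl⟩
    refine ⟨C.image (a :: ·), ⟨?_, ?_⟩, Finset.card_image_of_injective _ List.cons_injective⟩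
    · intro x hx
      rw [Finset.mem_image] at hx
      obtain ⟨x₀, hx₀, rfl⟩ := hx
      obtain ⟨hlen, hder⟩ := hC.1 x₀ hx₀
      refine ⟨by simp [hlen]; omega, ?_⟩
      exact derivLE_cons a (by simpa using hder)
    · intro x hx y hy hne hcon
      rw [Finset.mem_image] at hx hy
      obtain ⟨x₀, hx₀, rfl⟩ := hx
      obtain ⟨y₀, hy₀, rfl⟩ := hy
      obtain ⟨z, hz1, hz2⟩ := hcon
      have hx0shape := shape_deriv (by simpa using (hC.1 x₀ hx₀).2) hshape_t
      have hy0shape := shape_deriv (by simpa using (hC.1 y₀ hy₀).2) hshape_t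
      exact hC.2 x₀ hx₀ y₀ hy₀ (fun h => hne (by rw [h]))
        (key_confusable hx0shape hy0shape hz1 hz2)
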